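/- Let X be a finite indecomposable quandle such that [G_X, G_X] acts freely (hence regularly) on X. Then every 2-cocycle q : X × X → A with values in an abelian group A (trivial action) is cohomologous to a constant cocycle; equivalently H²(X, ℂˣ) ≅ ℂˣ. -/

import Mathlib

open Rack Quandles

namespace Stmt15Aux

/-- The auxiliary group of pairs (function to `A`, permutation of `X`). -/
@[ext]
structure W (X : Type*) (A : Type*) where
  f : X → A
  σ : Equiv.Perm X

namespace W

variable {X : Type*} {A : Type*} [AddCommGroup A]

instance : Mul (W X A) :=
  ⟨fun w v => ⟨fun z => w.f (v.σ z) + v.f z, w.σ * v.σ⟩⟩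

instance : One (W X A) := ⟨⟨0, 1⟩⟩

instance : Inv (W X A) :=
  ⟨fun w => ⟨fun z => -(w.f (w.σ⁻¹ z)), w.σ⁻¹⟩⟩

@[simp] lemma mul_f (w v : W X A) (z : X) : (w * v).f z = w.f (v.σ z) + v.f z := rfl
@[simp] lemma mul_σ (w v : W X A) : (w * v).σ = w.σ * v.σ := rfl
@[simp] lemma one_f (z : X) : (1 : W X A).f z = 0 := rfl
@[simp] lemma one_σ : (1 : W X A).σ = 1 := rfl
@[simp] lemma inv_f (w : W X A) (z : X) : (w⁻¹).f z = -(w.f (w.σ⁻¹ z)) := rfl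
@[simp] lemma inv_σ (w : W X A) : (w⁻¹).σ = w.σ⁻¹ := rfl

instance : Group (W X A) where
  mul_assoc a b c := by
    ext z
    · simp [add_assoc]
    · simp [mul_assoc]
  one_mul a := by ext z <;> simp
  mul_one a := by ext z <;> simp
  inv_mul_cancel a := by ext z <;> simp

/-- Projection onto the permutation component. -/
def proj : W X A →* Equiv.Perm X where
  toFun := W.σ
  map_one' := rfl
  map_mul' _ _ := rfl

end W

variable {X : Type*} [Quandle X] {A : Type*} [AddCommGroup A]

/-- The shelf homomorphism determined by a rack 2-cocycle `q`. -/
def qhom (q : X → X → A)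
    (hq : ∀ x y z : X, q (x ◃ y) (x ◃ z) + q x z = q x (y ◃ z) + q y z) :
    X →◃ Quandle.Conj (W X A) where
  toFun x := ⟨q x, act' x⟩
  map_act' := by
    intro x y
    rw [Quandle.conj_act_eq_conj, eq_mul_inv_iff_mul_eq]
    ext z
    · simpa using hq x y z
    · simpa using (Shelf.self_distrib (x := x) (y := y) (z := z)).symm

/-- The induced homomorphism from the enveloping group. -/
def Φ (q : X → X → A)
    (hq : ∀ x y z : X, q (x ◃ y) (x ◃ z) + q x z = q x (y ◃ z) + q y z) :
    EnvelGroup X →* W X A :=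
  toEnvelGroup.map (qhom q hq)

lemma Φ_incl (q : X → X → A) (hq : ∀ x y z : X, q (x ◃ y) (x ◃ z) + q x z = q x (y ◃ z) + q y z)
    (x : X) : Φ q hq (toEnvelGroup X x) = ⟨q x, act' x⟩ := rfl

lemma shelfHom_ext {S T : Type*} [Shelf S] [Shelf T] (f g : S →◃ T)
    (h : f.toFun = g.toFun) : f = g := by
  cases f; cases g; cases h; rfl

lemma σ_eq (q : X → X → A)
    (hq : ∀ x y z : X, q (x ◃ y) (x ◃ z) + q x z = q x (y ◃ z) + q y z) (g : EnvelGroup X) :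
    (Φ q hq g).σ = envelAction g := by
  have h : W.proj.comp (Φ q hq) = envelAction (R := X) :=
    toEnvelGroup.univ_uniq X _ (toConj X) (W.proj.comp (Φ q hq)) (shelfHom_ext _ _ rfl)
  exact DFunLike.congr_fun h g

/-- The degree homomorphism. -/
def deg : EnvelGroup X →* Multiplicative ℤ :=
  toEnvelGroup.map
    { toFun := fun _ => Multiplicative.ofAdd 1
      map_act' := by
        intro x y
        rw [Quandle.conj_act_eq_conj, mul_comm, inv_mul_cancel_left] }

lemma deg_incl (x : X) : deg (toEnvelGroup X x) = Multiplicative.ofAdd 1 := rfl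

/-- The quotient map into the enveloping group, typed at `EnvelGroup`. -/
def mk (R : Type*) [Rack R] (p : PreEnvelGroup R) : EnvelGroup R := ⟦p⟧

lemma mk_unit (R : Type*) [Rack R] : mk R PreEnvelGroup.unit = 1 := rfl
lemma mk_mul (R : Type*) [Rack R] (a b : PreEnvelGroup R) :
    mk R (PreEnvelGroup.mul a b) = mk R a * mk R b := rfl
lemma mk_inv (R : Type*) [Rack R] (a : PreEnvelGroup R) :
    mk R (PreEnvelGroup.inv a) = (mk R a)⁻¹ := rfl

lemma closure_range (R : Type*) [Rack R] :
    Subgroup.closure (Set.range (toEnvelGroup R)) = ⊤ := by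
  have key : ∀ p : PreEnvelGroup R,
      mk R p ∈ Subgroup.closure (Set.range (toEnvelGroup R)) := by
    intro p
    induction p with
    | unit =>
      rw [mk_unit]
      exact Subgroup.one_mem _
    | incl x => exact Subgroup.subset_closure ⟨x, rfl⟩
    | mul a b ha hb =>
      rw [mk_mul]
      exact Subgroup.mul_mem _ ha hb
    | inv a ha =>
      rw [mk_inv]
      exact Subgroup.inv_mem _ ha
  rw [eq_top_iff]
  intro g _
  exact Quotient.inductionOn g key

lemma conj_envel (g : EnvelGroup X) (x : X) :
    toEnvelGroup X (envelAction g x) = g * toEnvelGroup X x * g⁻¹ := by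
  have hmem : g ∈ Subgroup.closure (Set.range (toEnvelGroup X)) := by
    rw [closure_range]; trivial
  revert x
  induction hmem using Subgroup.closure_induction with
  | mem w hw =>
    intro x
    obtain ⟨y, rfl⟩ := hw
    rw [envelAction_prop]
    exact (toEnvelGroup X).map_act'
  | one => intro x; simp
  | mul a b ha hb iha ihb =>
    intro x
    have h0 : envelAction (a * b) x = envelAction a (envelAction b x) := by
      rw [map_mul]; rfl
    rw [h0, iha, ihb]
    group
  | inv a ha iha =>
    intro x
    have h1 : envelAction a (envelAction a⁻¹ x) = x := by
      rw [← Equiv.Perm.mul_apply, ← map_mul, mul_inv_cancel, map_one]; rfl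
    have h2 := iha (envelAction a⁻¹ x)
    rw [h1] at h2
    rw [inv_inv, h2]
    group

lemma mem_commutator_of_deg (x₀ : X)
    (hind : ∀ x y : X, ∃ g : EnvelGroup X, envelAction g x = y)
    (g : EnvelGroup X) (hg : deg g = 1) : g ∈ commutator (EnvelGroup X) := by
  classical
  set π : EnvelGroup X →* Abelianization (EnvelGroup X) := Abelianization.of with hπ
  have hgen : ∀ x : X, π (toEnvelGroup X x) = π (toEnvelGroup X x₀) := by
    intro x
    obtain ⟨g, hg⟩ := hind x₀ x
    rw [← hg, conj_envel, map_mul, map_mul, map_inv, mul_comm, inv_mul_cancel_left]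
  have hF : (zpowersHom _ (π (toEnvelGroup X x₀))).comp deg = π := by
    refine MonoidHom.eq_of_eqOn_dense (closure_range X) ?_
    rintro w ⟨x, rfl⟩
    have : deg (toEnvelGroup X x) = Multiplicative.ofAdd 1 := rfl
    simp only [MonoidHom.comp_apply, this, zpowersHom_apply]
    rw [hgen x]
    simp
  have : π g = 1 := by
    rw [← hF]
    simp only [MonoidHom.comp_apply, hg, map_one]
  exact (QuotientGroup.eq_one_iff g).mp this

/-- The stabilizer of `x₀` in the enveloping group. -/
def stab (x₀ : X) : Subgroup (EnvelGroup X) :=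
  (MulAction.stabilizer (Equiv.Perm X) x₀).comap envelAction

lemma mem_stab {x₀ : X} {g : EnvelGroup X} :
    g ∈ stab x₀ ↔ envelAction g x₀ = x₀ := by
  simp [stab, MulAction.mem_stabilizer_iff, Equiv.Perm.smul_def]

lemma e_mem_stab (x₀ : X) : toEnvelGroup X x₀ ∈ stab x₀ := by
  rw [mem_stab, envelAction_prop]
  exact Quandle.fix

lemma stab_eq_pow (x₀ : X)
    (hind : ∀ x y : X, ∃ g : EnvelGroup X, envelAction g x = y)
    (hfree : ∀ n ∈ commutator (EnvelGroup X), (∃ y : X, envelAction n y = y) → n = 1)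
    {s : EnvelGroup X} (hs : s ∈ stab x₀) :
    s = toEnvelGroup X x₀ ^ (Multiplicative.toAdd (deg s)) := by
  set d : ℤ := Multiplicative.toAdd (deg s) with hd
  set n : EnvelGroup X := s * (toEnvelGroup X x₀) ^ (-d) with hn
  have hsn : n ∈ stab x₀ := by
    refine Subgroup.mul_mem _ hs (Subgroup.zpow_mem _ (e_mem_stab x₀) _)
  have hdeg : deg n = 1 := by
    have h1 : (Multiplicative.ofAdd (1 : ℤ)) ^ (-d) = Multiplicative.ofAdd (-d) := by
      rw [← ofAdd_zsmul]; norm_num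
    rw [hn, map_mul, map_zpow, deg_incl, h1, ← ofAdd_toAdd (deg s), ← hd, ← ofAdd_add,
      add_neg_cancel, ofAdd_zero]
  have : n = 1 := hfree n (mem_commutator_of_deg x₀ hind n hdeg) ⟨x₀, mem_stab.mp hsn⟩
  have h2 : s * (toEnvelGroup X x₀) ^ (-d) = 1 := by rw [← hn, this]
  calc s = s * ((toEnvelGroup X x₀) ^ (-d) * (toEnvelGroup X x₀) ^ d) := by
            rw [← zpow_add, neg_add_cancel, zpow_zero, mul_one]
    _ = (s * (toEnvelGroup X x₀) ^ (-d)) * (toEnvelGroup X x₀) ^ d := by rw [mul_assoc]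
    _ = toEnvelGroup X x₀ ^ d := by rw [h2, one_mul]

variable (q : X → X → A)
    (hq : ∀ x y z : X, q (x ◃ y) (x ◃ z) + q x z = q x (y ◃ z) + q y z)

/-- The evaluation at `x₀` of the cocycle extension, restricted to the stabilizer,
is a group homomorphism. -/
def ψ (x₀ : X) : stab x₀ →* Multiplicative A where
  toFun g := Multiplicative.ofAdd ((Φ q hq g.1).f x₀)
  map_one' := by
    have : (Φ q hq 1).f x₀ = 0 := by rw [map_one]; rfl
    simp [this]
  map_mul' g h := by
    have h1 : (Φ q hq (g.1 * h.1)).f x₀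
        = (Φ q hq g.1).f ((Φ q hq h.1).σ x₀) + (Φ q hq h.1).f x₀ := by
      rw [map_mul]; rfl
    have h2 : (Φ q hq h.1).σ x₀ = x₀ := by
      rw [σ_eq]; exact mem_stab.mp h.2
    rw [h2] at h1
    simp only [Subgroup.coe_mul, h1]
    rw [← ofAdd_add]

lemma c_epow (x₀ : X) (d : ℤ) :
    (Φ q hq (toEnvelGroup X x₀ ^ d)).f x₀ = d • q x₀ x₀ := by
  have hmem : toEnvelGroup X x₀ ^ d ∈ stab x₀ :=
    Subgroup.zpow_mem _ (e_mem_stab x₀) _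
  have key : ψ q hq x₀ ((⟨toEnvelGroup X x₀, e_mem_stab x₀⟩ : stab x₀) ^ d)
      = (ψ q hq x₀ ⟨toEnvelGroup X x₀, e_mem_stab x₀⟩) ^ d := map_zpow _ _ _
  have h1 : ((⟨toEnvelGroup X x₀, e_mem_stab x₀⟩ : stab x₀) ^ d : stab x₀).1
      = toEnvelGroup X x₀ ^ d := by
    exact SubgroupClass.coe_zpow _ _
  have h2 : ψ q hq x₀ ⟨toEnvelGroup X x₀, e_mem_stab x₀⟩
      = Multiplicative.ofAdd (q x₀ x₀) := by
    simp only [ψ, MonoidHom.coe_mk, OneHom.coe_mk]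
    rw [Φ_incl]
  rw [h2] at key
  have h3 : ψ q hq x₀ ((⟨toEnvelGroup X x₀, e_mem_stab x₀⟩ : stab x₀) ^ d)
      = Multiplicative.ofAdd ((Φ q hq (toEnvelGroup X x₀ ^ d)).f x₀) := by
    simp only [ψ, MonoidHom.coe_mk, OneHom.coe_mk, h1]
  rw [h3, ← ofAdd_zsmul] at key
  exact Multiplicative.ofAdd.injective key

end Stmt15Aux

open Stmt15Aux in
/-- if the commutator subgroup `[G_X, G_X]` acts freely (hence regularly) on
the finite indecomposable quandle `X`, then every rack 2-cocycle with values in an abelian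
group `A` (trivial action) is cohomologous to a constant cocycle; equivalently
`H²(X, ℂˣ) ≅ ℂˣ`. -/
theorem stmt_15 {X : Type*} [Quandle X] [Fintype X] {A : Type*} [AddCommGroup A]
    (hind : ∀ x y : X, ∃ g : EnvelGroup X, envelAction g x = y)
    (hfree : ∀ n ∈ commutator (EnvelGroup X), (∃ y : X, envelAction n y = y) → n = 1)
    (q : X → X → A)
    (hq : ∀ x y z : X, q (x ◃ y) (x ◃ z) + q x z = q x (y ◃ z) + q y z) :
    ∃ (a : A) (γ : X → A), ∀ x y : X, q x y = a + γ (x ◃ y) - γ y := by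
  classical
  rcases isEmpty_or_nonempty X with hX | ⟨⟨x₀⟩⟩
  · exact ⟨0, 0, fun x => isEmptyElim x⟩
  set a : A := q x₀ x₀ with ha
  -- choose group elements carrying x₀ to each point
  set g : X → EnvelGroup X := fun y => Classical.choose (hind x₀ y) with hg
  have hgy : ∀ y : X, envelAction (g y) x₀ = y := fun y => Classical.choose_spec (hind x₀ y)
  set γ : X → A := fun y => (Φ q hq (g y)).f x₀ - (Multiplicative.toAdd (deg (g y))) • a with hγ
  refine ⟨a, γ, fun x y => ?_⟩
  -- g' carries x₀ to x ◃ y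
  set g' : EnvelGroup X := toEnvelGroup X x * g y with hg'
  have hg'act : envelAction g' x₀ = x ◃ y := by
    rw [hg', map_mul, Equiv.Perm.mul_apply, hgy, envelAction_prop]
  -- s is in the stabilizer of x₀
  set s : EnvelGroup X := g'⁻¹ * g (x ◃ y) with hs
  have hsmem : s ∈ stab x₀ := by
    rw [mem_stab, hs, map_mul, Equiv.Perm.mul_apply, hgy, map_inv]
    rw [← hg'act]; exact Equiv.symm_apply_apply _ _
  set d : ℤ := Multiplicative.toAdd (deg s) with hd
  have hspow : s = toEnvelGroup X x₀ ^ d := stab_eq_pow x₀ hind hfree hsmem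
  have hk : g (x ◃ y) = g' * s := by rw [hs, mul_inv_cancel_left]
  -- compute the cocycle values
  have hcs : (Φ q hq s).f x₀ = d • a := by rw [hspow]; exact c_epow q hq x₀ d
  have hσs : (Φ q hq s).σ x₀ = x₀ := by rw [σ_eq]; exact mem_stab.mp hsmem
  have hck : (Φ q hq (g (x ◃ y))).f x₀ = (Φ q hq g').f x₀ + d • a := by
    rw [hk, map_mul, W.mul_f, hσs, hcs]
  have hcg' : (Φ q hq g').f x₀ = q x y + (Φ q hq (g y)).f x₀ := by
    rw [hg', map_mul, W.mul_f, σ_eq, hgy, Φ_incl]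
  -- compute degrees
  have hdk : Multiplicative.toAdd (deg (g (x ◃ y)))
      = (Multiplicative.toAdd (deg (g y)) + 1) + d := by
    rw [hk, map_mul deg, hg', map_mul deg, deg_incl]
    simp only [toAdd_mul, toAdd_ofAdd, hd]
    ring
  -- put it all together
  have hγ1 : γ (x ◃ y) = q x y + γ y - a := by
    rw [hγ]
    simp only [hck, hcg', hdk]
    rw [add_zsmul, add_zsmul, one_zsmul]
    abel
  rw [hγ1]
  abel
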